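/- For every positive integer n, the number of quadruples (x₁,x₂,x₃,x₄) of integers with x₁² + x₂² + x₃² + x₄² = n equals 8 times the sum of the positive divisors of n that are not divisible by 4. -/

import Mathlib

open Zsqrtd GaussianInt

local notation "ℤi" => GaussianInt

namespace Jacobi4



def w (a b : ℕ) : ℤ :=
  if a % 2 = 1 ∧ b % 2 = 1 then (if (a + b) % 4 = 0 then 1 else -1) else 0

def h : ℕ → ℕ → ℤ
  | a, b =>
    if _h0 : a = 0 ∨ b = 0 then 0
    else if _hab : b < a then w a b + h (a - b) b
    else if _hba : a < b then w a b + h a (b - a)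
    else w a b
  termination_by a b => a + b
  decreasing_by all_goals omega

lemma h_unfold (a b : ℕ) (ha : 1 ≤ a) (hb : 1 ≤ b) :
    h a b = w a b + ((if b < a then h (a-b) b else 0) + (if a < b then h a (b-a) else 0)) := by
  rw [h]
  split_ifs <;> first | omega | ring

/-- solutions of `a*x + b*y = n` in positive integers, as `((a,x),(b,y))` -/
def S (n : ℕ) : Finset ((ℕ × ℕ) × ℕ × ℕ) :=
  (((Finset.Icc 1 n) ×ˢ (Finset.Icc 1 n)) ×ˢ ((Finset.Icc 1 n) ×ˢ (Finset.Icc 1 n))).filter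
    (fun q => q.1.1 * q.1.2 + q.2.1 * q.2.2 = n)

lemma mem_S {n : ℕ} {q : (ℕ × ℕ) × ℕ × ℕ} :
    q ∈ S n ↔ 1 ≤ q.1.1 ∧ 1 ≤ q.1.2 ∧ 1 ≤ q.2.1 ∧ 1 ≤ q.2.2 ∧
      q.1.1 * q.1.2 + q.2.1 * q.2.2 = n := by
  obtain ⟨⟨a, x⟩, b, y⟩ := q
  simp only [S, Finset.mem_filter, Finset.mem_product, Finset.mem_Icc]
  constructor
  · rintro ⟨⟨⟨⟨h1, _⟩, h2, _⟩, ⟨h3, _⟩, h4, _⟩, h5⟩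
    exact ⟨h1, h2, h3, h4, h5⟩
  · rintro ⟨h1, h2, h3, h4, h5⟩
    have e1 : a ≤ a * x := Nat.le_mul_of_pos_right a (by omega)
    have e2 : x ≤ a * x := Nat.le_mul_of_pos_left x (by omega)
    have e3 : b ≤ b * y := Nat.le_mul_of_pos_right b (by omega)
    have e4 : y ≤ b * y := Nat.le_mul_of_pos_left y (by omega)
    exact ⟨⟨⟨⟨h1, by omega⟩, h2, by omega⟩, ⟨h3, by omega⟩, h4, by omega⟩, h5⟩

lemma sum_h_left (n : ℕ) :
    ∑ q ∈ (S n).filter (fun q => q.2.1 < q.1.1), h (q.1.1 - q.2.1) q.2.1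
      = ∑ q ∈ (S n).filter (fun q => q.1.2 < q.2.2), h q.1.1 q.2.1 := by
  apply Finset.sum_nbij' (fun q => ((q.1.1 - q.2.1, q.1.2), (q.2.1, q.2.2 + q.1.2)))
    (fun q => ((q.1.1 + q.2.1, q.1.2), (q.2.1, q.2.2 - q.1.2)))
  · rintro ⟨⟨a, x⟩, b, y⟩ hq
    simp only [Finset.mem_filter, mem_S] at hq ⊢
    obtain ⟨⟨h1, h2, h3, h4, h5⟩, h6⟩ := hq
    have hbx : b * x ≤ a * x := Nat.mul_le_mul_right x (le_of_lt h6)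
    have e : (a - b) * x + b * (y + x) = n := by rw [Nat.sub_mul, Nat.mul_add]; omega
    exact ⟨⟨by omega, h2, h3, by omega, e⟩, by omega⟩
  · rintro ⟨⟨a, x⟩, b, y⟩ hq
    simp only [Finset.mem_filter, mem_S] at hq ⊢
    obtain ⟨⟨h1, h2, h3, h4, h5⟩, h6⟩ := hq
    have hbx : b * x ≤ b * y := Nat.mul_le_mul_left b (le_of_lt h6)
    have e : (a + b) * x + b * (y - x) = n := by rw [Nat.add_mul, Nat.mul_sub]; omega
    exact ⟨⟨by omega, h2, h3, by omega, e⟩, by omega⟩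
  · rintro ⟨⟨a, x⟩, b, y⟩ hq
    simp only [Finset.mem_filter, mem_S] at hq
    obtain ⟨⟨h1, h2, h3, h4, h5⟩, h6⟩ := hq
    simp only [Prod.mk.injEq, eq_self_iff_true, and_true, true_and]
    omega
  · rintro ⟨⟨a, x⟩, b, y⟩ hq
    simp only [Finset.mem_filter, mem_S] at hq
    obtain ⟨⟨h1, h2, h3, h4, h5⟩, h6⟩ := hq
    simp only [Prod.mk.injEq, eq_self_iff_true, and_true, true_and]
    omega
  · rintro ⟨⟨a, x⟩, b, y⟩ hq
    simp

lemma sum_h_right (n : ℕ) :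
    ∑ q ∈ (S n).filter (fun q => q.1.1 < q.2.1), h q.1.1 (q.2.1 - q.1.1)
      = ∑ q ∈ (S n).filter (fun q => q.2.2 < q.1.2), h q.1.1 q.2.1 := by
  apply Finset.sum_nbij' (fun q => ((q.1.1, q.1.2 + q.2.2), (q.2.1 - q.1.1, q.2.2)))
    (fun q => ((q.1.1, q.1.2 - q.2.2), (q.2.1 + q.1.1, q.2.2)))
  · rintro ⟨⟨a, x⟩, b, y⟩ hq
    simp only [Finset.mem_filter, mem_S] at hq ⊢
    obtain ⟨⟨h1, h2, h3, h4, h5⟩, h6⟩ := hq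
    have hay : a * y ≤ b * y := Nat.mul_le_mul_right y (le_of_lt h6)
    have e : a * (x + y) + (b - a) * y = n := by rw [Nat.sub_mul, Nat.mul_add]; omega
    exact ⟨⟨h1, by omega, by omega, h4, e⟩, by omega⟩
  · rintro ⟨⟨a, x⟩, b, y⟩ hq
    simp only [Finset.mem_filter, mem_S] at hq ⊢
    obtain ⟨⟨h1, h2, h3, h4, h5⟩, h6⟩ := hq
    have hay : a * y ≤ a * x := Nat.mul_le_mul_left a (le_of_lt h6)
    have e : a * (x - y) + (b + a) * y = n := by rw [Nat.add_mul, Nat.mul_sub]; omega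
    exact ⟨⟨h1, by omega, by omega, h4, e⟩, by omega⟩
  · rintro ⟨⟨a, x⟩, b, y⟩ hq
    simp only [Finset.mem_filter, mem_S] at hq
    obtain ⟨⟨h1, h2, h3, h4, h5⟩, h6⟩ := hq
    simp only [Prod.mk.injEq, eq_self_iff_true, and_true, true_and]
    omega
  · rintro ⟨⟨a, x⟩, b, y⟩ hq
    simp only [Finset.mem_filter, mem_S] at hq
    obtain ⟨⟨h1, h2, h3, h4, h5⟩, h6⟩ := hq
    simp only [Prod.mk.injEq, eq_self_iff_true, and_true, true_and]
    omega
  · rintro ⟨⟨a, x⟩, b, y⟩ hq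
    simp

/-- closed form for `h` -/
def hcl (a b : ℕ) : ℤ :=
  if a % 2 = 1 ∧ b % 2 = 1 ∧ a % 4 = b % 4 then -1
  else if (a % 2 = 1 ∧ b % 4 = 2) ∨ (a % 4 = 2 ∧ b % 2 = 1) then -1
  else 0

theorem h_eq_hcl : ∀ a b : ℕ, 1 ≤ a → 1 ≤ b → h a b = hcl a b := by
  have key : ∀ n a b : ℕ, a + b ≤ n → 1 ≤ a → 1 ≤ b → h a b = hcl a b := by
    intro n
    induction n with
    | zero => intro a b h1 h2 h3; omega
    | succ n ih =>
      intro a b hab ha hb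
      rw [h]
      split_ifs with h0 h1 h2
      · omega
      · rw [ih (a - b) b (by omega) (by omega) hb]
        unfold w hcl
        split_ifs <;> omega
      · rw [ih a (b - a) (by omega) ha (by omega)]
        unfold w hcl
        split_ifs <;> omega
      · have : a = b := by omega
        subst this
        unfold w hcl
        split_ifs <;> omega
  exact fun a b ha hb => key (a + b) a b le_rfl ha hb



def chi (n : ℕ) : ℤ := if n % 4 = 1 then 1 else if n % 4 = 3 then -1 else 0


lemma sum_mod4 (g : ℕ → ℤ) (f : ℕ → ℤ) :
    ∀ c : ℕ, (∀ a : ℕ, 1 ≤ a → a < c → f a = g (a % 4)) →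
    ∑ a ∈ Finset.Ico 1 c, f a =
    (((c+2)/4 : ℕ) : ℤ) * g 1 + (((c+1)/4 : ℕ) : ℤ) * g 2 + ((c/4 : ℕ) : ℤ) * g 3
      + ((((c-1)/4 : ℕ)) : ℤ) * g 0 := by
  intro c
  induction c with
  | zero => intro _; simp
  | succ c ih =>
    intro hf
    rcases Nat.eq_zero_or_pos c with hc | hc
    · subst hc; simp
    · rw [Finset.sum_Ico_succ_top (by omega), ih (fun a h1 h2 => hf a h1 (by omega)),
        hf c hc (by omega)]
      have h4 : c % 4 = 0 ∨ c % 4 = 1 ∨ c % 4 = 2 ∨ c % 4 = 3 := by omega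
      rcases h4 with h | h | h | h
      · have e1 : (c+1+2)/4 = (c+2)/4 := by omega
        have e2 : (c+1+1)/4 = (c+1)/4 := by omega
        have e3 : (c+1)/4 = c/4 := by omega
        have e0 : (c+1-1)/4 = (c-1)/4 + 1 := by omega
        rw [h, e1, e2, e3, e0]; push_cast; ring
      · have e1 : (c+1+2)/4 = (c+2)/4 + 1 := by omega
        have e2 : (c+1+1)/4 = (c+1)/4 := by omega
        have e3 : (c+1)/4 = c/4 := by omega
        have e0 : (c+1-1)/4 = (c-1)/4 := by omega
        rw [h, e1, e2, e3, e0]; push_cast; ring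
      · have e1 : (c+1+2)/4 = (c+2)/4 := by omega
        have e2 : (c+1+1)/4 = (c+1)/4 + 1 := by omega
        have e3 : (c+1)/4 = c/4 := by omega
        have e0 : (c+1-1)/4 = (c-1)/4 := by omega
        rw [h, e1, e2, e3, e0]; push_cast; ring
      · have e1 : (c+1+2)/4 = (c+2)/4 := by omega
        have e2 : (c+1+1)/4 = (c+1)/4 := by omega
        have e3 : (c+1)/4 = c/4 + 1 := by omega
        have e0 : (c+1-1)/4 = (c-1)/4 := by omega
        rw [h, e1, e2, e3, e0]; push_cast; ring

/-- evaluation of the antidiagonal sum of the closed form -/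
lemma F_eval (c : ℕ) :
    2 * ∑ a ∈ Finset.Ico 1 c, hcl a (c - a) = chi c - (if 4 ∣ c then 0 else (c : ℤ)) := by
  have h4 : c % 4 = 0 ∨ c % 4 = 1 ∨ c % 4 = 2 ∨ c % 4 = 3 := by omega
  rcases h4 with h | h | h | h
  · rw [sum_mod4 (fun _ => (0:ℤ)) _ c (fun a h1 h2 => by
      show hcl a (c - a) = (0:ℤ)
      unfold hcl; split_ifs <;> omega)]
    have hchi : chi c = 0 := by unfold chi; split_ifs <;> omega
    have hd : 4 ∣ c := by omega
    rw [hchi, if_pos hd]; ring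
  · rw [sum_mod4 (fun r => if r = 2 ∨ r = 3 then (-1:ℤ) else 0) _ c (fun a h1 h2 => by
      show hcl a (c - a) = if a % 4 = 2 ∨ a % 4 = 3 then (-1:ℤ) else 0
      unfold hcl; split_ifs <;> omega)]
    have hchi : chi c = 1 := by unfold chi; split_ifs <;> omega
    have hd : ¬ 4 ∣ c := by omega
    rw [hchi, if_neg hd]
    norm_num
    omega
  · rw [sum_mod4 (fun r => if r = 1 ∨ r = 3 then (-1:ℤ) else 0) _ c (fun a h1 h2 => by
      show hcl a (c - a) = if a % 4 = 1 ∨ a % 4 = 3 then (-1:ℤ) else 0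
      unfold hcl; split_ifs <;> omega)]
    have hchi : chi c = 0 := by unfold chi; split_ifs <;> omega
    have hd : ¬ 4 ∣ c := by omega
    rw [hchi, if_neg hd]
    norm_num
    omega
  · rw [sum_mod4 (fun r => if r = 1 ∨ r = 2 then (-1:ℤ) else 0) _ c (fun a h1 h2 => by
      show hcl a (c - a) = if a % 4 = 1 ∨ a % 4 = 2 then (-1:ℤ) else 0
      unfold hcl; split_ifs <;> omega)]
    have hchi : chi c = -1 := by unfold chi; split_ifs <;> omega
    have hd : ¬ 4 ∣ c := by omega
    rw [hchi, if_neg hd]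
    norm_num
    omega



lemma diag_sum (n : ℕ) (hn : 1 ≤ n) :
    ∑ q ∈ (S n).filter (fun q => q.1.2 = q.2.2), h q.1.1 q.2.1
      = ∑ c ∈ n.divisors, ∑ a ∈ Finset.Ico 1 c, h a (c - a) := by
  rw [Finset.sum_sigma']
  apply Finset.sum_nbij' (i := fun q => (⟨q.1.1 + q.2.1, q.1.1⟩ : (_ : ℕ) × ℕ))
    (j := fun p => ((p.2, n / p.1), (p.1 - p.2, n / p.1)))
  · rintro ⟨⟨a, x⟩, b, y⟩ hq
    simp only [Finset.mem_filter, mem_S] at hq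
    obtain ⟨⟨h1, h2, h3, h4, h5⟩, h6⟩ := hq
    subst h6
    have hd : (a + b) ∣ n := ⟨x, by rw [← h5]; ring⟩
    simp only [Finset.mem_sigma, Nat.mem_divisors, Finset.mem_Ico]
    exact ⟨⟨hd, by omega⟩, h1, by omega⟩
  · rintro ⟨c, a⟩ hp
    simp only [Finset.mem_sigma, Nat.mem_divisors, Finset.mem_Ico] at hp
    obtain ⟨⟨hd, hn0⟩, h1, h2⟩ := hp
    have hc : 1 ≤ c := by omega
    have hq : 1 ≤ n / c := Nat.div_pos (Nat.le_of_dvd (by omega) hd) (by omega)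
    have he : a * (n / c) + (c - a) * (n / c) = n := by
      rw [← Nat.add_mul]
      have : a + (c - a) = c := by omega
      rw [this, Nat.mul_div_cancel' hd]
    simp only [Finset.mem_filter, mem_S]
    exact ⟨⟨h1, hq, by omega, hq, he⟩, trivial⟩
  · rintro ⟨⟨a, x⟩, b, y⟩ hq
    simp only [Finset.mem_filter, mem_S] at hq
    obtain ⟨⟨h1, h2, h3, h4, h5⟩, h6⟩ := hq
    subst h6
    have he : n / (a + b) = x := by
      have : (a + b) * x = n := by rw [← h5]; ring
      rw [← this, Nat.mul_div_cancel_left x (by omega)]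
    simp only [he, Prod.mk.injEq, eq_self_iff_true, and_true, true_and]
    omega
  · rintro ⟨c, a⟩ hp
    simp only [Finset.mem_sigma, Nat.mem_divisors, Finset.mem_Ico] at hp
    obtain ⟨⟨hd, hn0⟩, h1, h2⟩ := hp
    have e : a + (c - a) = c := by omega
    simp [e]
  · rintro ⟨⟨a, x⟩, b, y⟩ hq
    simp only [Finset.mem_filter, mem_S] at hq
    obtain ⟨⟨h1, h2, h3, h4, h5⟩, h6⟩ := hq
    show h a b = h a (a + b - a)
    have e : a + b - a = b := by omega
    rw [e]

theorem machine (n : ℕ) (hn : 1 ≤ n) :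
    ∑ q ∈ S n, w q.1.1 q.2.1 = ∑ c ∈ n.divisors, ∑ a ∈ Finset.Ico 1 c, hcl a (c - a) := by
  have step1 : ∑ q ∈ S n, h q.1.1 q.2.1 = ∑ q ∈ S n, w q.1.1 q.2.1
      + (∑ q ∈ (S n).filter (fun q => q.2.1 < q.1.1), h (q.1.1 - q.2.1) q.2.1
        + ∑ q ∈ (S n).filter (fun q => q.1.1 < q.2.1), h q.1.1 (q.2.1 - q.1.1)) := by
    rw [Finset.sum_filter, Finset.sum_filter, ← Finset.sum_add_distrib,
      ← Finset.sum_add_distrib]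
    apply Finset.sum_congr rfl
    intro q hq
    rw [mem_S] at hq
    exact h_unfold _ _ hq.1 hq.2.2.1
  rw [sum_h_left, sum_h_right] at step1
  have part : ∑ q ∈ S n, h q.1.1 q.2.1
      = ∑ q ∈ (S n).filter (fun q => q.1.2 < q.2.2), h q.1.1 q.2.1
        + ∑ q ∈ (S n).filter (fun q => q.2.2 < q.1.2), h q.1.1 q.2.1
        + ∑ q ∈ (S n).filter (fun q => q.1.2 = q.2.2), h q.1.1 q.2.1 := by
    rw [← Finset.sum_filter_add_sum_filter_not (S n) (fun q => q.1.2 < q.2.2)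
      (fun q => h q.1.1 q.2.1)]
    rw [← Finset.sum_filter_add_sum_filter_not ((S n).filter (fun q => ¬ q.1.2 < q.2.2))
      (fun q => q.2.2 < q.1.2) (fun q => h q.1.1 q.2.1)]
    rw [Finset.filter_filter, Finset.filter_filter]
    rw [add_assoc]
    congr 1
    congr 1
    · apply Finset.sum_congr _ (fun _ _ => rfl)
      apply Finset.filter_congr
      intro q _
      constructor
      · rintro ⟨_, h2⟩; exact h2
      · intro h2; exact ⟨by omega, h2⟩
    · apply Finset.sum_congr _ (fun _ _ => rfl)
      apply Finset.filter_congr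
      intro q _
      constructor
      · rintro ⟨hh1, hh2⟩; omega
      · intro h2; omega
  have key : ∑ q ∈ (S n).filter (fun q => q.1.2 = q.2.2), h q.1.1 q.2.1
      = ∑ q ∈ S n, w q.1.1 q.2.1 := by linarith [step1, part]
  rw [← key, diag_sum n hn]
  apply Finset.sum_congr rfl
  intro c hc
  apply Finset.sum_congr rfl
  intro a ha
  simp only [Finset.mem_Ico] at ha
  exact h_eq_hcl a (c - a) ha.1 (by omega)

/-- The master identity: twice the Liouville sum equals `E n - σ' n`. -/
theorem machine' (n : ℕ) (hn : 1 ≤ n) :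
    2 * ∑ q ∈ S n, w q.1.1 q.2.1
      = (∑ c ∈ n.divisors, chi c) - ∑ c ∈ n.divisors.filter (fun d => ¬ (4 ∣ d)), (c : ℤ) := by
  rw [machine n hn, Finset.mul_sum]
  rw [Finset.sum_congr rfl (fun c _ => F_eval c)]
  rw [Finset.sum_sub_distrib]
  congr 1
  rw [Finset.sum_filter]
  apply Finset.sum_congr rfl
  intro c _
  by_cases hc : 4 ∣ c <;> simp [hc]



/-- representations of n as ordered sum of two squares -/
noncomputable def R2 (n : ℕ) : Finset (ℤ × ℤ) :=
  ((Finset.Icc (-(n:ℤ)) n) ×ˢ (Finset.Icc (-(n:ℤ)) n)).filter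
    (fun p => p.1^2 + p.2^2 = (n:ℤ))

lemma bound_of_sq_le {x : ℤ} {n : ℕ} (hx : x^2 ≤ (n:ℤ)) : -(n:ℤ) ≤ x ∧ x ≤ n := by
  have hn : (0:ℤ) ≤ n := Int.natCast_nonneg n
  have h2 : x^2 ≤ (n:ℤ)^2 := by nlinarith
  exact abs_le_of_sq_le_sq' h2 hn

lemma mem_R2 {n : ℕ} {p : ℤ × ℤ} : p ∈ R2 n ↔ p.1^2 + p.2^2 = (n:ℤ) := by
  simp only [R2, Finset.mem_filter, Finset.mem_product, Finset.mem_Icc]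
  constructor
  · exact fun h => h.2
  · intro h
    have h1 : p.1^2 ≤ (n:ℤ) := by nlinarith [sq_nonneg p.2]
    have h2 : p.2^2 ≤ (n:ℤ) := by nlinarith [sq_nonneg p.1]
    exact ⟨⟨bound_of_sq_le h1, bound_of_sq_le h2⟩, h⟩

noncomputable def r2 (n : ℕ) : ℕ := (R2 n).card

lemma gnorm (z : ℤi) : z.norm = z.re^2 + z.im^2 := by
  rw [Zsqrtd.norm_def]; ring

/-- Gaussian integers of norm n -/
noncomputable def G (n : ℕ) : Finset ℤi := (R2 n).image (fun p => ⟨p.1, p.2⟩)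

lemma mem_G {n : ℕ} {z : ℤi} : z ∈ G n ↔ z.norm = (n:ℤ) := by
  simp only [G, Finset.mem_image]
  constructor
  · rintro ⟨p, hp, rfl⟩
    rw [mem_R2] at hp
    rw [gnorm]; exact hp
  · intro h
    exact ⟨(z.re, z.im), mem_R2.mpr (by rw [← gnorm]; exact h), rfl⟩

lemma card_G (n : ℕ) : (G n).card = r2 n := by
  apply Finset.card_image_of_injective
  intro p q h
  have h1 : p.1 = q.1 := congrArg Zsqrtd.re h
  have h2 : p.2 = q.2 := congrArg Zsqrtd.im h
  exact Prod.ext h1 h2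

lemma r2_zero : r2 0 = 1 := by
  have : R2 0 = {((0:ℤ), (0:ℤ))} := by
    ext p
    rw [mem_R2, Finset.mem_singleton]
    constructor
    · intro h
      push_cast at h
      have h1 : p.1 = 0 := by nlinarith [sq_nonneg p.1, sq_nonneg p.2]
      have h2 : p.2 = 0 := by nlinarith [sq_nonneg p.1, sq_nonneg p.2]
      exact Prod.ext h1 h2
    · rintro rfl; norm_num
  rw [r2, this, Finset.card_singleton]

lemma r2_one : r2 1 = 4 := by
  have : R2 1 = {((1:ℤ),(0:ℤ)), (-1,0), (0,1), (0,-1)} := by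
    ext p
    rw [mem_R2]
    simp only [Finset.mem_insert, Finset.mem_singleton, Prod.ext_iff]
    constructor
    · intro h
      push_cast at h
      have h1 : p.1^2 ≤ (1:ℤ) := by nlinarith [sq_nonneg p.2]
      have h2 : p.2^2 ≤ (1:ℤ) := by nlinarith [sq_nonneg p.1]
      have b1 := bound_of_sq_le (n := 1) (by exact_mod_cast h1)
      have b2 := bound_of_sq_le (n := 1) (by exact_mod_cast h2)
      push_cast at b1 b2
      obtain ⟨c1, c2⟩ := b1
      obtain ⟨c3, c4⟩ := b2
      interval_cases p.1 <;> interval_cases p.2 <;> simp_all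
    · rintro (⟨h1, h2⟩ | ⟨h1, h2⟩ | ⟨h1, h2⟩ | ⟨h1, h2⟩) <;> rw [h1, h2] <;> norm_num
  rw [r2, this]
  decide

/-- the four units of norm 1 -/
lemma norm_one_cases {z : ℤi} (h : z.norm = 1) :
    z = ⟨1,0⟩ ∨ z = ⟨-1,0⟩ ∨ z = ⟨0,1⟩ ∨ z = ⟨0,-1⟩ := by
  rw [gnorm] at h
  have h1 : z.re^2 ≤ (1:ℤ) := by nlinarith [sq_nonneg z.im]
  have h2 : z.im^2 ≤ (1:ℤ) := by nlinarith [sq_nonneg z.re]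
  have b1 : -1 ≤ z.re ∧ z.re ≤ 1 := by
    have := bound_of_sq_le (n := 1) (by exact_mod_cast h1); push_cast at this; exact this
  have b2 : -1 ≤ z.im ∧ z.im ≤ 1 := by
    have := bound_of_sq_le (n := 1) (by exact_mod_cast h2); push_cast at this; exact this
  obtain ⟨hre, him⟩ : z.re = z.re ∧ z.im = z.im := ⟨rfl, rfl⟩
  have hz : z = ⟨z.re, z.im⟩ := by rfl
  obtain ⟨b1l, b1r⟩ := b1
  obtain ⟨b2l, b2r⟩ := b2
  interval_cases hre : z.re <;> interval_cases him : z.im <;>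
    simp_all [Zsqrtd.ext_iff] <;> omega

lemma G_even {n : ℕ} (hn : 2 ∣ n) :
    G n = (G (n/2)).image (fun z => (⟨1,1⟩ : ℤi) * z) := by
  have hnorm11 : (⟨1,1⟩ : ℤi).norm = 2 := by simp [Zsqrtd.norm_def]
  have h2 : ((n/2 : ℕ) : ℤ) * 2 = (n:ℤ) := by exact_mod_cast Nat.div_mul_cancel hn
  ext z
  simp only [mem_G, Finset.mem_image]
  constructor
  · intro hz
    have hz' : z.re^2 + z.im^2 = (n:ℤ) := by rw [← gnorm]; exact hz
    have h0 : (2:ℤ) ∣ (z.re^2 + z.im^2) := by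
      rw [hz']
      exact_mod_cast Int.natCast_dvd_natCast.mpr hn
    have hcons1 : (2:ℤ) ∣ (z.re - 1) * z.re := by
      have h := Int.even_mul_succ_self (z.re - 1)
      rw [sub_add_cancel] at h
      exact h.two_dvd
    have hcons2 : (2:ℤ) ∣ (z.im - 1) * z.im := by
      have h := Int.even_mul_succ_self (z.im - 1)
      rw [sub_add_cancel] at h
      exact h.two_dvd
    have hsum : (2:ℤ) ∣ z.re + z.im := by
      have e : z.re + z.im = (z.re^2 + z.im^2) - ((z.re - 1) * z.re + (z.im - 1) * z.im) := by
        ring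
      rw [e]
      exact dvd_sub h0 (dvd_add hcons1 hcons2)
    obtain ⟨u, hu⟩ := hsum
    have hdiff : ∃ v : ℤ, z.im - z.re = 2 * v := ⟨(z.im - z.re)/2, by omega⟩
    obtain ⟨v, hv⟩ := hdiff
    have hre : z.re = u - v := by omega
    have him : z.im = u + v := by omega
    refine ⟨⟨u, v⟩, ?_, ?_⟩
    · rw [gnorm]
      have e2 : z.re^2 + z.im^2 = 2*u^2 + 2*v^2 := by rw [hre, him]; ring
      show u^2 + v^2 = ((n/2 : ℕ) : ℤ)
      linarith [hz', e2, h2]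
    · refine Zsqrtd.ext ?_ ?_
      · rw [Zsqrtd.re_mul]; show 1 * u + -1 * 1 * v = z.re; omega
      · rw [Zsqrtd.im_mul]; show 1 * v + 1 * u = z.im; omega
  · rintro ⟨z', hz', rfl⟩
    rw [Zsqrtd.norm_mul, hnorm11, hz']
    omega

lemma r2_even {n : ℕ} (hn : 2 ∣ n) : r2 n = r2 (n/2) := by
  rw [← card_G, ← card_G, G_even hn]
  apply Finset.card_image_of_injective
  intro a b hab
  have h0 : (⟨1,1⟩ : ℤi) ≠ 0 := by
    intro hc
    have := congrArg Zsqrtd.re hc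
    simp at this
  exact mul_left_cancel₀ h0 hab

lemma p3_dvd_both {p : ℕ} (hp : p.Prime) (h3 : p % 4 = 3) {x y : ℤ}
    (h : (p:ℤ) ∣ x^2 + y^2) : (p:ℤ) ∣ x ∧ (p:ℤ) ∣ y := by
  haveI : Fact p.Prime := ⟨hp⟩
  have key : ∀ u v : ℤ, (p:ℤ) ∣ u^2 + v^2 → (p:ℤ) ∣ v := by
    intro u v huv
    by_contra hv
    have hv' : (v : ZMod p) ≠ 0 := by
      intro hc
      exact hv ((ZMod.intCast_zmod_eq_zero_iff_dvd v p).mp hc)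
    have h0 : ((u:ZMod p))^2 + ((v:ZMod p))^2 = 0 := by
      have := (ZMod.intCast_zmod_eq_zero_iff_dvd (u^2+v^2) p).mpr huv
      push_cast at this
      exact this
    have hsq : ((u:ZMod p) * (v:ZMod p)⁻¹)^2 = -1 := by
      rw [mul_pow]
      have hu2 : ((u:ZMod p))^2 = -((v:ZMod p))^2 := by linear_combination h0
      rw [hu2]
      field_simp
    have : IsSquare (-1 : ZMod p) := ⟨_, by rw [← pow_two, hsq]⟩
    exact (ZMod.exists_sq_eq_neg_one_iff.mp this) h3
  constructor
  · exact key y x (by rwa [add_comm] at h)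
  · exact key x y h

lemma r2_p3_zero {p n : ℕ} (hp : p.Prime) (h3 : p % 4 = 3) (hdvd : p ∣ n)
    (h2 : ¬ (p^2 ∣ n)) : r2 n = 0 := by
  rw [← card_G, Finset.card_eq_zero]
  by_contra hne
  obtain ⟨z, hz⟩ := Finset.nonempty_of_ne_empty hne
  rw [mem_G] at hz
  have hd : (p:ℤ) ∣ z.re^2 + z.im^2 := by
    rw [← gnorm, hz]
    exact_mod_cast Int.natCast_dvd_natCast.mpr hdvd
  obtain ⟨hre, him⟩ := p3_dvd_both hp h3 hd
  obtain ⟨r, hr⟩ := hre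
  obtain ⟨s, hs⟩ := him
  apply h2
  have : ((p^2 : ℕ) : ℤ) ∣ (n:ℤ) := by
    rw [← hz, gnorm, hr, hs]
    push_cast
    exact ⟨r^2 + s^2, by ring⟩
  exact_mod_cast this

lemma r2_p3_step {p n : ℕ} (hp : p.Prime) (h3 : p % 4 = 3) (h2 : p^2 ∣ n) :
    r2 n = r2 (n/p^2) := by
  have hp0 : (0:ℤ) < p := by exact_mod_cast hp.pos
  have hGim : G n = (G (n/p^2)).image (fun z => (p : ℤi) * z) := by
    ext z
    simp only [mem_G, Finset.mem_image]
    constructor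
    · intro hz
      have hd : (p:ℤ) ∣ z.re^2 + z.im^2 := by
        rw [← gnorm, hz]
        exact_mod_cast Int.natCast_dvd_natCast.mpr (dvd_trans (dvd_pow_self p two_ne_zero) h2)
      obtain ⟨hre, him⟩ := p3_dvd_both hp h3 hd
      obtain ⟨r, hr⟩ := hre
      obtain ⟨s, hs⟩ := him
      refine ⟨⟨r, s⟩, ?_, ?_⟩
      · rw [gnorm]
        have hcast : ((n/p^2 : ℕ) : ℤ) * (p:ℤ)^2 = (n:ℤ) := by
          have := Nat.div_mul_cancel h2
          exact_mod_cast this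
        have hz' : z.re^2 + z.im^2 = (n:ℤ) := by rw [← gnorm]; exact hz
        have hpne : ((p:ℤ))^2 ≠ 0 := pow_ne_zero 2 (by exact_mod_cast hp.pos.ne')
        refine mul_right_cancel₀ hpne ?_
        show (r^2 + s^2) * (p:ℤ)^2 = ((n/p^2 : ℕ) : ℤ) * (p:ℤ)^2
        rw [hcast, ← hz', hr, hs]
        ring
      · show (p : ℤi) * _ = z
        refine Zsqrtd.ext ?_ ?_
        · rw [Zsqrtd.re_mul]
          simp [hr]
        · rw [Zsqrtd.im_mul]
          simp [hs]
    · rintro ⟨z', hz', rfl⟩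
      rw [Zsqrtd.norm_mul, hz']
      have hnp : ((p:ℕ) : ℤi).norm = (p:ℤ)^2 := by
        rw [Zsqrtd.norm_natCast]; ring
      rw [hnp]
      have hcast : ((n/p^2 : ℕ) : ℤ) * (p:ℤ)^2 = (n:ℤ) := by
        have := Nat.div_mul_cancel h2
        exact_mod_cast this
      linarith
  rw [← card_G, ← card_G, hGim]
  apply Finset.card_image_of_injective
  intro a b hab
  have h0 : (p : ℤi) ≠ 0 := by
    intro hc
    have := congrArg Zsqrtd.re hc
    simp at this
    omega
  exact mul_left_cancel₀ h0 hab

set_option synthInstance.maxHeartbeats 1000000 in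
lemma prime_of_norm_eq {p : ℕ} (hp : p.Prime) {z : ℤi} (h : z.norm = (p:ℤ)) : Prime z := by
  rw [← _root_.irreducible_iff_prime]
  constructor
  · intro hu
    have h1 := Zsqrtd.norm_eq_one_iff.mpr hu
    rw [h, Int.natAbs_natCast] at h1
    exact hp.one_lt.ne' h1
  · intro a b hab
    have hnab : (p:ℤ) = a.norm * b.norm := by rw [← h, hab, Zsqrtd.norm_mul]
    have hnat : p = a.norm.natAbs * b.norm.natAbs := by
      rw [← Int.natAbs_mul, ← hnab, Int.natAbs_natCast]
    have hd : a.norm.natAbs ∣ p := ⟨b.norm.natAbs, hnat⟩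
    rcases (Nat.Prime.eq_one_or_self_of_dvd hp _ hd) with h1 | h1
    · left; exact Zsqrtd.norm_eq_one_iff.mp h1
    · right
      apply Zsqrtd.norm_eq_one_iff.mp
      rw [h1] at hnat
      have hx : p * b.norm.natAbs = p * 1 := by rw [mul_one]; omega
      exact Nat.eq_of_mul_eq_mul_left hp.pos hx

lemma r2_p1_step {p n : ℕ} (hp : p.Prime) (h1 : p % 4 = 1) (hdvd : p ∣ n) (hn : 1 ≤ n) :
    r2 n + (if p^2 ∣ n then r2 (n/p^2) else 0) = 2 * r2 (n/p) := by
  haveI : Fact p.Prime := ⟨hp⟩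
  have hp2 := hp.two_le
  obtain ⟨A, B, hAB⟩ := Nat.Prime.sq_add_sq (p := p) (by omega)
  set π : ℤi := ⟨(A:ℤ), (B:ℤ)⟩ with hπdef
  have hπnorm : π.norm = (p:ℤ) := by
    rw [gnorm]
    show ((A:ℤ))^2 + ((B:ℤ))^2 = (p:ℤ)
    exact_mod_cast hAB
  have hsπnorm : (star π).norm = (p:ℤ) := by rw [Zsqrtd.norm_conj]; exact hπnorm
  have hπprime : Prime π := prime_of_norm_eq hp hπnorm
  have hsπprime : Prime (star π) := prime_of_norm_eq hp hsπnorm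
  have hπ0 : π ≠ 0 := hπprime.ne_zero
  have hsπ0 : star π ≠ 0 := hsπprime.ne_zero
  have hp0 : ((p:ℕ) : ℤ) ≠ 0 := by exact_mod_cast hp.pos.ne'
  have hππ : π * star π = ((p:ℕ) : ℤi) := by
    have hmc := Zsqrtd.norm_eq_mul_conj π
    rw [hπnorm] at hmc
    rw [← hmc]
    push_cast
    ring
  -- star π does not divide π
  have hnd : ¬ (star π ∣ π) := by
    rintro ⟨t, ht⟩
    have hnt : t.norm = 1 := by
      have hc := congrArg Zsqrtd.norm ht
      rw [Zsqrtd.norm_mul, Zsqrtd.norm_conj, hπnorm] at hc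
      have : (p:ℤ) * 1 = (p:ℤ) * t.norm := by linarith
      exact (mul_left_cancel₀ hp0 this).symm
    have hB0 : ¬ (B = 0) := by
      intro hB
      rw [hB] at hAB
      simp at hAB
      have hd : A ∣ p := ⟨A, by rw [← hAB]; ring⟩
      rcases hp.eq_one_or_self_of_dvd A hd with h | h
      · rw [h] at hAB; omega
      · rw [h] at hAB; nlinarith
    have hA0 : ¬ (A = 0) := by
      intro hA
      rw [hA] at hAB
      simp at hAB
      have hd : B ∣ p := ⟨B, by rw [← hAB]; ring⟩
      rcases hp.eq_one_or_self_of_dvd B hd with h | h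
      · rw [h] at hAB; omega
      · rw [h] at hAB; nlinarith
    rcases norm_one_cases hnt with h | h | h | h <;>
      · subst h
        rw [hπdef] at ht
        simp only [Zsqrtd.ext_iff, Zsqrtd.star_mk, Zsqrtd.re_mul, Zsqrtd.im_mul,
          Zsqrtd.re, Zsqrtd.im] at ht
        push_cast at ht
        obtain ⟨e1, e2⟩ := ht
        first
        | (have : A = 0 := by omega; exact hA0 this)
        | (have : B = 0 := by omega; exact hB0 this)
        | (have hAB2 : A = B := by omega
           rw [hAB2] at hAB
           have : p = 2 * B^2 := by omega
           omega)
        | omega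
  -- the division casts
  have hcast : ((n/p : ℕ) : ℤ) * (p:ℤ) = (n:ℤ) := by
    have := Nat.div_mul_cancel hdvd
    exact_mod_cast this
  -- divisor extraction
  have extract : ∀ z w : ℤi, w.norm = (p:ℤ) → z.norm = (n:ℤ) → w ∣ z →
      ∃ t, t.norm = ((n/p : ℕ) : ℤ) ∧ z = w * t := by
    rintro z w hw hz ⟨t, ht⟩
    refine ⟨t, ?_, ht⟩
    have hc := congrArg Zsqrtd.norm ht
    rw [Zsqrtd.norm_mul, hw, hz] at hc
    have : (p:ℤ) * t.norm = (p:ℤ) * ((n/p : ℕ) : ℤ) := by rw [← hc]; linarith [hcast]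
    exact mul_left_cancel₀ hp0 this
  -- covering
  have hcover : G n = (G (n/p)).image (fun z => π * z) ∪ (G (n/p)).image (fun z => star π * z) := by
    ext z
    simp only [Finset.mem_union, Finset.mem_image, mem_G]
    constructor
    · intro hz
      have hdz : π ∣ z * star z := by
        have : ((p:ℕ) : ℤi) ∣ ((n:ℕ) : ℤi) := by
          exact_mod_cast (Nat.cast_dvd_cast hdvd : ((p:ℕ):ℤi) ∣ (n:ℤi))
        have hzz : z * star z = ((n:ℕ) : ℤi) := by
          have hmc := Zsqrtd.norm_eq_mul_conj z
          rw [hz] at hmc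
          rw [← hmc]
          push_cast
          ring
        rw [hzz]
        exact dvd_trans ⟨star π, hππ.symm⟩ this
      rcases hπprime.2.2 _ _ hdz with hd | hd
      · obtain ⟨t, hnt, hzt⟩ := extract z π hπnorm hz hd
        exact Or.inl ⟨t, hnt, hzt.symm⟩
      · have hd' : star π ∣ z := by
          obtain ⟨t, ht⟩ := hd
          refine ⟨star t, ?_⟩
          have := congrArg star ht
          rwa [star_star, star_mul', ] at this
        obtain ⟨t, hnt, hzt⟩ := extract z (star π) hsπnorm hz hd'
        exact Or.inr ⟨t, hnt, hzt.symm⟩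
    · rintro (⟨t, hnt, rfl⟩ | ⟨t, hnt, rfl⟩)
      · rw [Zsqrtd.norm_mul, hπnorm, hnt, ← hcast]; ring
      · rw [Zsqrtd.norm_mul, hsπnorm, hnt, ← hcast]; ring
  -- intersection
  have hinter : (G (n/p)).image (fun z => π * z) ∩ (G (n/p)).image (fun z => star π * z)
      = if p^2 ∣ n then (G (n/p^2)).image (fun z => ((p:ℕ) : ℤi) * z) else ∅ := by
    have hc2 : ∀ z : ℤi, z ∈ (G (n/p)).image (fun z => π * z) →
        z ∈ (G (n/p)).image (fun z => star π * z) →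
        p^2 ∣ n ∧ ∃ t, t.norm = ((n/p^2 : ℕ) : ℤ) ∧ z = ((p:ℕ) : ℤi) * t ∧ (p^2 ∣ n) := by
      intro z hz1 hz2
      simp only [Finset.mem_image, mem_G] at hz1 hz2
      obtain ⟨t1, hnt1, hzt1⟩ := hz1
      obtain ⟨t2, hnt2, hzt2⟩ := hz2
      have hd : star π ∣ π * t1 := ⟨t2, by rw [hzt1, ← hzt2]⟩
      rcases hsπprime.2.2 _ _ hd with hd' | hd'
      · exact absurd hd' hnd
      · obtain ⟨t3, ht3⟩ := hd'
        have hz3 : z = ((p:ℕ) : ℤi) * t3 := by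
          rw [← hzt1, ht3, ← mul_assoc, hππ]
        have hnz : z.norm = (n:ℤ) := by
          rw [← hzt1, Zsqrtd.norm_mul, hπnorm, hnt1, ← hcast]; ring
        have hnt3 : t3.norm * (p:ℤ)^2 = (n:ℤ) := by
          have := congrArg Zsqrtd.norm hz3
          rw [hnz, Zsqrtd.norm_mul, Zsqrtd.norm_natCast] at this
          rw [this]; ring
        have hdvd2 : p^2 ∣ n := by
          have : ((p:ℕ)^2 : ℤ) ∣ (n:ℤ) := Dvd.intro_left _ (by push_cast; exact hnt3)
          exact_mod_cast this
        refine ⟨hdvd2, t3, ?_, hz3, hdvd2⟩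
        have hcast2 : ((n/p^2 : ℕ) : ℤ) * (p:ℤ)^2 = (n:ℤ) := by
          have := Nat.div_mul_cancel hdvd2
          exact_mod_cast this
        have : t3.norm * (p:ℤ)^2 = ((n/p^2 : ℕ) : ℤ) * (p:ℤ)^2 := by rw [hnt3, hcast2]
        exact mul_right_cancel₀ (pow_ne_zero 2 hp0) this
    by_cases hsq : p^2 ∣ n
    · rw [if_pos hsq]
      ext z
      constructor
      · intro hz
        rw [Finset.mem_inter] at hz
        obtain ⟨_, t, hnt, hzt, _⟩ := hc2 z hz.1 hz.2
        simp only [Finset.mem_image, mem_G]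
        exact ⟨t, hnt, hzt.symm⟩
      · intro hz
        simp only [Finset.mem_image, mem_G] at hz
        obtain ⟨t, hnt, rfl⟩ := hz
        have hnp2 : n / p = p * (n / p^2) := by
          obtain ⟨m, rfl⟩ := hsq
          rw [Nat.mul_div_cancel_left m (by positivity), pow_two, mul_assoc,
            Nat.mul_div_cancel_left _ hp.pos]
        rw [Finset.mem_inter]
        constructor
        · simp only [Finset.mem_image, mem_G]
          refine ⟨star π * t, ?_, by rw [← mul_assoc, hππ]⟩
          rw [Zsqrtd.norm_mul, hsπnorm, hnt, hnp2]
          push_cast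
          ring
        · simp only [Finset.mem_image, mem_G]
          refine ⟨π * t, ?_, by rw [← mul_assoc, mul_comm (star π) π, hππ]⟩
          rw [Zsqrtd.norm_mul, hπnorm, hnt, hnp2]
          push_cast
          ring
    · rw [if_neg hsq]
      ext z
      simp only [Finset.mem_inter, Finset.notMem_empty, iff_false]
      rintro ⟨hz1, hz2⟩
      exact hsq (hc2 z hz1 hz2).1
  -- put it together
  have hinj1 : (Finset.image (fun z => π * z) (G (n/p))).card = r2 (n/p) := by
    rw [Finset.card_image_of_injective _ (mul_right_injective₀ hπ0), card_G]
  have hinj2 : (Finset.image (fun z => star π * z) (G (n/p))).card = r2 (n/p) := by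
    rw [Finset.card_image_of_injective _ (mul_right_injective₀ hsπ0), card_G]
  have hkey := Finset.card_union_add_card_inter
    ((G (n/p)).image (fun z => π * z)) ((G (n/p)).image (fun z => star π * z))
  rw [← hcover, hinter, hinj1, hinj2, card_G] at hkey
  by_cases hsq : p^2 ∣ n
  · rw [if_pos hsq] at hkey ⊢
    have hp2ne : ((p:ℕ) : ℤi) ≠ 0 := by
      intro hc
      have := congrArg Zsqrtd.re hc
      simp at this
      omega
    rw [Finset.card_image_of_injective _ (mul_right_injective₀ hp2ne), card_G] at hkey
    omega
  · rw [if_neg hsq] at hkey ⊢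
    simp only [Finset.card_empty] at hkey
    omega




def Efun (n : ℕ) : ℤ := ∑ d ∈ n.divisors, chi d

lemma chi_mul (m n : ℕ) : chi (m * n) = chi m * chi n := by
  have hm : m % 4 < 4 := Nat.mod_lt _ (by norm_num)
  have hn : n % 4 < 4 := Nat.mod_lt _ (by norm_num)
  have h : (m * n) % 4 = (m % 4) * (n % 4) % 4 := Nat.mul_mod m n 4
  rcases (by omega : m % 4 = 0 ∨ m % 4 = 1 ∨ m % 4 = 2 ∨ m % 4 = 3) with h1 | h1 | h1 | h1 <;>
    rcases (by omega : n % 4 = 0 ∨ n % 4 = 1 ∨ n % 4 = 2 ∨ n % 4 = 3) with h2 | h2 | h2 | h2 <;>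
      simp [chi, h, h1, h2]

def chiA : ArithmeticFunction ℤ := ⟨chi, by simp [chi]⟩

lemma chiA_mult : chiA.IsMultiplicative :=
  ⟨by simp [chiA, chi], fun {m n} _ => chi_mul m n⟩

lemma Efun_multiplicative {m n : ℕ} (h : m.Coprime n) :
    Efun (m * n) = Efun m * Efun n := by
  have hz := (ArithmeticFunction.isMultiplicative_zeta.natCast (R := ℤ)).mul chiA_mult
  have e : ∀ k : ℕ, Efun k = ((ArithmeticFunction.zeta : ArithmeticFunction ℕ) *
      chiA : ArithmeticFunction ℤ) k := by
    intro k
    rw [ArithmeticFunction.coe_zeta_mul_apply]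
    rfl
  rw [e, e, e, hz.map_mul_of_coprime h]

lemma chi_pow (p k : ℕ) : chi (p ^ k) = (chi p) ^ k := by
  induction k with
  | zero => simp [chi]
  | succ k ih => rw [pow_succ, pow_succ, chi_mul, ih]

lemma Efun_prime_pow {p : ℕ} (hp : p.Prime) (a : ℕ) :
    Efun (p ^ a) = ∑ j ∈ Finset.range (a + 1), (chi p) ^ j := by
  rw [Efun, Nat.sum_divisors_prime_pow hp]
  exact Finset.sum_congr rfl (fun j _ => chi_pow p j)

lemma Efun_pp_p1 {p : ℕ} (hp : p.Prime) (h1 : p % 4 = 1) (a : ℕ) :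
    Efun (p ^ a) = (a : ℤ) + 1 := by
  rw [Efun_prime_pow hp]
  have : chi p = 1 := by simp [chi, h1]
  simp [this]

lemma Efun_pp_p3 {p : ℕ} (hp : p.Prime) (h3 : p % 4 = 3) (a : ℕ) :
    Efun (p ^ a) = if a % 2 = 0 then 1 else 0 := by
  rw [Efun_prime_pow hp]
  have hc : chi p = -1 := by simp [chi, h3]
  rw [hc]
  induction a with
  | zero => simp
  | succ a ih =>
    rw [Finset.sum_range_succ, ih]
    rcases (by omega : a % 2 = 0 ∨ a % 2 = 1) with h | h
    · have he : Odd (a + 1) := Nat.odd_iff.mpr (by omega)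
      rw [he.neg_one_pow]
      simp [h]
      omega
    · have he : Even (a + 1) := Nat.even_iff.mpr (by omega)
      rw [he.neg_one_pow]
      simp [h]
      omega

lemma Efun_even {n : ℕ} (hn2 : 2 ∣ n) (hn : 1 ≤ n) : Efun n = Efun (n / 2) := by
  have key : ∀ m : ℕ, Efun m = ∑ d ∈ m.divisors.filter (fun d => ¬ 2 ∣ d), chi d := by
    intro m
    rw [Efun]
    symm
    apply Finset.sum_filter_of_ne
    intro d _ hd
    simp only [chi] at hd
    split_ifs at hd with h1 h2 <;> omega
  rw [key, key]
  congr 1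
  ext d
  simp only [Finset.mem_filter, Nat.mem_divisors]
  constructor
  · rintro ⟨⟨hd, hn0⟩, hodd⟩
    refine ⟨⟨?_, by omega⟩, hodd⟩
    have hcop : Nat.Coprime d 2 :=
      Nat.coprime_comm.mp ((Nat.Prime.coprime_iff_not_dvd Nat.prime_two).mpr hodd)
    apply Nat.Coprime.dvd_of_dvd_mul_right hcop
    rw [Nat.div_mul_cancel hn2]
    exact hd
  · rintro ⟨⟨hd, hn0⟩, hodd⟩
    exact ⟨⟨dvd_trans hd (Nat.div_dvd_of_dvd hn2), by omega⟩, hodd⟩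

/-- splitting data for a prime divisor -/
lemma split_data {p n : ℕ} (hp : p.Prime) (hdvd : p ∣ n) (hn : 1 ≤ n) :
    ∃ a u : ℕ, n = p ^ a * u ∧ 1 ≤ a ∧ 1 ≤ u ∧ ¬ p ∣ u ∧ (p ^ a).Coprime u ∧
      a = n.factorization p := by
  have hn0 : n ≠ 0 := by omega
  refine ⟨n.factorization p, n / p ^ n.factorization p,
    (Nat.ordProj_mul_ordCompl_eq_self n p).symm, ?_, ?_, ?_, ?_, rfl⟩
  · exact (Nat.Prime.factorization_pos_of_dvd hp hn0 hdvd)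
  · exact Nat.ordCompl_pos p hn0
  · exact Nat.not_dvd_ordCompl hp hn0
  · exact Nat.Coprime.pow_left _ ((Nat.Prime.coprime_iff_not_dvd hp).mpr
      (Nat.not_dvd_ordCompl hp hn0))

lemma Efun_p3_zero {p n : ℕ} (hp : p.Prime) (h3 : p % 4 = 3) (hdvd : p ∣ n)
    (hnsq : ¬ p ^ 2 ∣ n) (hn : 1 ≤ n) : Efun n = 0 := by
  obtain ⟨a, u, hnpu, ha, hu, hpu, hcop, hfa⟩ := split_data hp hdvd hn
  have ha1 : a = 1 := by
    by_contra hne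
    exact hnsq ((Nat.Prime.pow_dvd_iff_le_factorization hp (by omega : n ≠ 0)).mpr (by omega))
  subst ha1
  rw [hnpu, Efun_multiplicative hcop, Efun_pp_p3 hp h3]
  norm_num

lemma Efun_p3_step {p n : ℕ} (hp : p.Prime) (h3 : p % 4 = 3) (hsq : p ^ 2 ∣ n)
    (hn : 1 ≤ n) : Efun n = Efun (n / p ^ 2) := by
  obtain ⟨a, u, hnpu, ha, hu, hpu, hcop, hfa⟩ := split_data hp (dvd_trans (dvd_pow_self p two_ne_zero) hsq) hn
  have ha2 : 2 ≤ a := by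
    rw [hfa]
    exact (Nat.Prime.pow_dvd_iff_le_factorization hp (by omega : n ≠ 0)).mp hsq
  have hdiv : n / p ^ 2 = p ^ (a - 2) * u := by
    rw [hnpu]
    have e : p ^ a = p ^ 2 * p ^ (a - 2) := by
      rw [← pow_add]
      congr 1
      omega
    rw [e, mul_assoc, Nat.mul_div_cancel_left _ (pow_pos hp.pos 2)]
  rw [hdiv, hnpu, Efun_multiplicative hcop,
    Efun_multiplicative (Nat.Coprime.pow_left _ ((hp.coprime_iff_not_dvd).mpr hpu)),
    Efun_pp_p3 hp h3, Efun_pp_p3 hp h3]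
  have : a % 2 = (a - 2) % 2 := by omega
  rw [this]

lemma Efun_p1_step {p n : ℕ} (hp : p.Prime) (h1 : p % 4 = 1) (hdvd : p ∣ n)
    (hn : 1 ≤ n) :
    Efun n + (if p ^ 2 ∣ n then Efun (n / p ^ 2) else 0) = 2 * Efun (n / p) := by
  obtain ⟨a, u, hnpu, ha, hu, hpu, hcop, hfa⟩ := split_data hp hdvd hn
  have hcop1 : ∀ k : ℕ, (p ^ k).Coprime u :=
    fun k => Nat.Coprime.pow_left _ ((hp.coprime_iff_not_dvd).mpr hpu)
  have hdivp : n / p = p ^ (a - 1) * u := by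
    rw [hnpu]
    have e : p ^ a = p * p ^ (a - 1) := by
      rw [← pow_succ']
      congr 1
      omega
    rw [e, mul_assoc, Nat.mul_div_cancel_left _ hp.pos]
  by_cases hsq : p ^ 2 ∣ n
  · have ha2 : 2 ≤ a := by
      rw [hfa]
      exact (Nat.Prime.pow_dvd_iff_le_factorization hp (by omega : n ≠ 0)).mp hsq
    have hdiv2 : n / p ^ 2 = p ^ (a - 2) * u := by
      rw [hnpu]
      have e : p ^ a = p ^ 2 * p ^ (a - 2) := by
        rw [← pow_add]; congr 1; omega
      rw [e, mul_assoc, Nat.mul_div_cancel_left _ (pow_pos hp.pos 2)]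
    rw [if_pos hsq, hdiv2, hdivp, hnpu, Efun_multiplicative (hcop1 a),
      Efun_multiplicative (hcop1 (a-1)), Efun_multiplicative (hcop1 (a-2)),
      Efun_pp_p1 hp h1, Efun_pp_p1 hp h1, Efun_pp_p1 hp h1]
    have e1 : ((a : ℤ) + 1) + ((a:ℤ) - 2 + 1) = 2 * ((a:ℤ) - 1 + 1) := by ring
    have ec1 : ((a - 1 : ℕ) : ℤ) = (a:ℤ) - 1 := by omega
    have ec2 : ((a - 2 : ℕ) : ℤ) = (a:ℤ) - 2 := by omega
    rw [ec1, ec2]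
    ring
  · have ha1 : a = 1 := by
      by_contra hne
      exact hsq ((Nat.Prime.pow_dvd_iff_le_factorization hp (by omega : n ≠ 0)).mpr (by omega))
    subst ha1
    rw [if_neg hsq, hdivp, hnpu, Efun_multiplicative (hcop1 1),
      Efun_multiplicative (hcop1 (1-1)), Efun_pp_p1 hp h1, Efun_pp_p1 hp h1]
    norm_num


theorem r2_eq : ∀ n : ℕ, 1 ≤ n → (r2 n : ℤ) = 4 * Efun n := by
  intro n
  induction n using Nat.strong_induction_on with
  | _ n ih =>
    intro hn
    rcases eq_or_lt_of_le hn with h1 | h1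
    · have : n = 1 := h1.symm
      subst this
      rw [r2_one]
      have : Efun 1 = 1 := by simp [Efun, chi]
      rw [this]
      norm_num
    · have hp : n.minFac.Prime := Nat.minFac_prime (by omega)
      set p := n.minFac with hpdef
      have hdvd : p ∣ n := n.minFac_dvd
      have hp2 := hp.two_le
      have hple := Nat.le_of_dvd (by omega) hdvd
      by_cases hpeq : p = 2
      · have h2 : 2 ∣ n := hpeq ▸ hdvd
        have hlt : n / 2 < n := Nat.div_lt_self (by omega) (by omega)
        have hge : 1 ≤ n / 2 := (Nat.one_le_div_iff (by omega)).mpr (by omega)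
        rw [r2_even h2, Efun_even h2 hn]
        exact ih _ hlt hge
      · have hodd : p % 2 = 1 := by
          rcases hp.eq_two_or_odd with h | h
          · exact absurd h hpeq
          · exact h
        rcases (by omega : p % 4 = 1 ∨ p % 4 = 3) with h4 | h4
        · have key := r2_p1_step hp h4 hdvd hn
          have ekey := Efun_p1_step hp h4 hdvd hn
          have hltp : n / p < n := Nat.div_lt_self (by omega) (by omega)
          have hgep : 1 ≤ n / p := (Nat.one_le_div_iff (by omega)).mpr hple
          have ihp := ih _ hltp hgep
          by_cases hsq : p ^ 2 ∣ n
          · have hple2 := Nat.le_of_dvd (by omega) hsq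
            have hp2pos : 0 < p ^ 2 := by positivity
            have hlt2 : n / p ^ 2 < n := Nat.div_lt_self (by omega) (by nlinarith)
            have hge2 : 1 ≤ n / p ^ 2 := (Nat.one_le_div_iff hp2pos).mpr hple2
            have ih2 := ih _ hlt2 hge2
            rw [if_pos hsq] at key ekey
            have keyz : (r2 n : ℤ) + (r2 (n / p ^ 2) : ℤ) = 2 * (r2 (n / p) : ℤ) := by
              exact_mod_cast key
            linarith
          · rw [if_neg hsq] at key ekey
            have keyz : (r2 n : ℤ) + 0 = 2 * (r2 (n / p) : ℤ) := by exact_mod_cast key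
            linarith
        · by_cases hsq : p ^ 2 ∣ n
          · have hple2 := Nat.le_of_dvd (by omega) hsq
            have hp2pos : 0 < p ^ 2 := by positivity
            have hlt2 : n / p ^ 2 < n := Nat.div_lt_self (by omega) (by nlinarith)
            have hge2 : 1 ≤ n / p ^ 2 := (Nat.one_le_div_iff hp2pos).mpr hple2
            rw [r2_p3_step hp h4 hsq, Efun_p3_step hp h4 hsq hn]
            exact ih _ hlt2 hge2
          · rw [r2_p3_zero hp h4 hdvd hsq, Efun_p3_zero hp h4 hdvd hsq hn]
            norm_num

/-- representations as sums of four squares -/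
noncomputable def R4 (n : ℕ) : Finset (ℤ × ℤ × ℤ × ℤ) :=
  ((Finset.Icc (-(n:ℤ)) n) ×ˢ ((Finset.Icc (-(n:ℤ)) n) ×ˢ
    ((Finset.Icc (-(n:ℤ)) n) ×ˢ (Finset.Icc (-(n:ℤ)) n)))).filter
    (fun x => x.1^2 + x.2.1^2 + x.2.2.1^2 + x.2.2.2^2 = (n:ℤ))

lemma mem_R4 {n : ℕ} {x : ℤ × ℤ × ℤ × ℤ} :
    x ∈ R4 n ↔ x.1^2 + x.2.1^2 + x.2.2.1^2 + x.2.2.2^2 = (n:ℤ) := by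
  simp only [R4, Finset.mem_filter, Finset.mem_product, Finset.mem_Icc]
  constructor
  · exact fun h => h.2
  · intro h
    have h1 : x.1^2 ≤ (n:ℤ) := by nlinarith [sq_nonneg x.2.1, sq_nonneg x.2.2.1, sq_nonneg x.2.2.2]
    have h2 : x.2.1^2 ≤ (n:ℤ) := by nlinarith [sq_nonneg x.1, sq_nonneg x.2.2.1, sq_nonneg x.2.2.2]
    have h3 : x.2.2.1^2 ≤ (n:ℤ) := by nlinarith [sq_nonneg x.1, sq_nonneg x.2.1, sq_nonneg x.2.2.2]
    have h4 : x.2.2.2^2 ≤ (n:ℤ) := by nlinarith [sq_nonneg x.1, sq_nonneg x.2.1, sq_nonneg x.2.2.1]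
    exact ⟨⟨bound_of_sq_le h1, bound_of_sq_le h2, bound_of_sq_le h3, bound_of_sq_le h4⟩, h⟩

noncomputable def r4 (n : ℕ) : ℕ := (R4 n).card

lemma r4_conv (n : ℕ) : r4 n = ∑ p ∈ Finset.HasAntidiagonal.antidiagonal n, r2 p.1 * r2 p.2 := by
  have e1 : ∀ p : ℕ × ℕ, r2 p.1 * r2 p.2 = ((R2 p.1) ×ˢ (R2 p.2)).card := by
    intro p
    rw [Finset.card_product]
    rfl
  rw [Finset.sum_congr rfl (fun p _ => e1 p), ← Finset.card_sigma]
  symm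
  apply Finset.card_nbij' (i := fun q => (q.2.1.1, q.2.1.2, q.2.2.1, q.2.2.2))
    (j := fun x => ⟨((x.1^2 + x.2.1^2).toNat, (x.2.2.1^2 + x.2.2.2^2).toNat),
      ((x.1, x.2.1), (x.2.2.1, x.2.2.2))⟩)
  · rintro ⟨⟨a, b⟩, ⟨⟨x1, x2⟩, ⟨x3, x4⟩⟩⟩ hq
    simp only [Finset.mem_coe, Finset.mem_sigma, Finset.HasAntidiagonal.mem_antidiagonal, Finset.mem_product, mem_R2] at hq
    obtain ⟨hab, h12, h34⟩ := hq
    rw [Finset.mem_coe, mem_R4]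
    show x1^2 + x2^2 + x3^2 + x4^2 = (n:ℤ)
    calc x1^2 + x2^2 + x3^2 + x4^2 = (x1^2 + x2^2) + (x3^2 + x4^2) := by ring
    _ = (a:ℤ) + (b:ℤ) := by rw [h12, h34]
    _ = ((a + b : ℕ) : ℤ) := by push_cast; ring
    _ = (n:ℤ) := by rw [hab]
  · rintro ⟨x1, x2, x3, x4⟩ hx
    rw [Finset.mem_coe, mem_R4] at hx
    simp only [Finset.mem_coe, Finset.mem_sigma, Finset.HasAntidiagonal.mem_antidiagonal, Finset.mem_product, mem_R2]
    have n1 : (0:ℤ) ≤ x1^2 + x2^2 := by positivity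
    have n2 : (0:ℤ) ≤ x3^2 + x4^2 := by positivity
    have e1 := Int.toNat_of_nonneg n1
    have e2 := Int.toNat_of_nonneg n2
    refine ⟨?_, ?_, ?_⟩
    · show (x1^2 + x2^2).toNat + (x3^2 + x4^2).toNat = n
      have ec : (((x1^2 + x2^2).toNat + (x3^2 + x4^2).toNat : ℕ) : ℤ) = (n:ℤ) := by
        push_cast
        rw [e1, e2]
        linarith [hx]
      exact_mod_cast ec
    · exact (Int.toNat_of_nonneg n1).symm
    · exact (Int.toNat_of_nonneg n2).symm
  · rintro ⟨⟨a, b⟩, ⟨⟨x1, x2⟩, ⟨x3, x4⟩⟩⟩ hq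
    simp only [Finset.mem_coe, Finset.mem_sigma, Finset.HasAntidiagonal.mem_antidiagonal, Finset.mem_product, mem_R2] at hq
    obtain ⟨hab, h12, h34⟩ := hq
    dsimp only
    rw [show ((x1^2 + x2^2).toNat) = a from by rw [h12]; simp,
      show ((x3^2 + x4^2).toNat) = b from by rw [h34]; simp]
  · rintro ⟨x1, x2, x3, x4⟩ _
    rfl

lemma r4_split (n : ℕ) (hn : 1 ≤ n) :
    (r4 n : ℤ) = 2 * (r2 n : ℤ)
      + ∑ p ∈ (Finset.HasAntidiagonal.antidiagonal n).filter (fun p => 1 ≤ p.1 ∧ 1 ≤ p.2),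
          (r2 p.1 : ℤ) * (r2 p.2 : ℤ) := by
  have e0 : (r4 n : ℤ) = ∑ p ∈ Finset.HasAntidiagonal.antidiagonal n, (r2 p.1 : ℤ) * (r2 p.2 : ℤ) := by
    rw [r4_conv]
    push_cast
    rfl
  rw [e0, ← Finset.sum_filter_add_sum_filter_not (Finset.HasAntidiagonal.antidiagonal n)
    (fun p => 1 ≤ p.1 ∧ 1 ≤ p.2)]
  have hbd : (Finset.HasAntidiagonal.antidiagonal n).filter (fun p => ¬ (1 ≤ p.1 ∧ 1 ≤ p.2))
      = {((0:ℕ), n), (n, (0:ℕ))} := by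
    ext ⟨a, b⟩
    simp only [Finset.mem_filter, Finset.HasAntidiagonal.mem_antidiagonal, Finset.mem_insert,
      Finset.mem_singleton, Prod.mk.injEq]
    omega
  rw [hbd, Finset.sum_pair (by intro hc; rw [Prod.mk.injEq] at hc; omega)]
  rw [r2_zero]
  push_cast
  ring

lemma chi_mul_chi_eq_neg_w (d f : ℕ) : chi d * chi f = - w d f := by
  unfold chi w
  split_ifs <;> omega

lemma conv_expand (n : ℕ) :
    ∑ p ∈ (Finset.HasAntidiagonal.antidiagonal n).filter (fun p => 1 ≤ p.1 ∧ 1 ≤ p.2),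
        Efun p.1 * Efun p.2
      = ∑ q ∈ S n, chi q.1.1 * chi q.2.1 := by
  have e1 : ∀ p : ℕ × ℕ, Efun p.1 * Efun p.2
      = ∑ r ∈ p.1.divisorsAntidiagonal ×ˢ p.2.divisorsAntidiagonal, chi r.1.1 * chi r.2.1 := by
    intro p
    have ha : Efun p.1 = ∑ x ∈ p.1.divisorsAntidiagonal, chi x.1 :=
      (Nat.sum_divisorsAntidiagonal (fun d _ => chi d)).symm
    have hb : Efun p.2 = ∑ y ∈ p.2.divisorsAntidiagonal, chi y.1 :=
      (Nat.sum_divisorsAntidiagonal (fun d _ => chi d)).symm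
    rw [ha, hb, Finset.sum_mul_sum]
    rw [Finset.sum_product]
  have step : ∑ p ∈ (Finset.HasAntidiagonal.antidiagonal n).filter (fun p => 1 ≤ p.1 ∧ 1 ≤ p.2),
      Efun p.1 * Efun p.2
      = ∑ p ∈ (Finset.HasAntidiagonal.antidiagonal n).filter (fun p => 1 ≤ p.1 ∧ 1 ≤ p.2),
          ∑ r ∈ p.1.divisorsAntidiagonal ×ˢ p.2.divisorsAntidiagonal, chi r.1.1 * chi r.2.1 :=
    Finset.sum_congr rfl (fun p _ => e1 p)
  rw [step, Finset.sum_sigma']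
  apply Finset.sum_nbij' (i := fun q => q.2) (j := fun q => ⟨(q.1.1 * q.1.2, q.2.1 * q.2.2), q⟩)
  · rintro ⟨⟨a, b⟩, ⟨⟨d, e⟩, ⟨f, g⟩⟩⟩ hq
    simp only [Finset.mem_sigma, Finset.mem_filter, Finset.HasAntidiagonal.mem_antidiagonal,
      Finset.mem_product, Nat.mem_divisorsAntidiagonal] at hq
    obtain ⟨⟨hab, ha, hb⟩, ⟨hde, ha0⟩, ⟨hfg, hb0⟩⟩ := hq
    rw [mem_S]
    have hd1 : 1 ≤ d := Nat.pos_of_ne_zero (by rintro rfl; simp at hde; omega)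
    have he1 : 1 ≤ e := Nat.pos_of_ne_zero (by rintro rfl; simp at hde; omega)
    have hf1 : 1 ≤ f := Nat.pos_of_ne_zero (by rintro rfl; simp at hfg; omega)
    have hg1 : 1 ≤ g := Nat.pos_of_ne_zero (by rintro rfl; simp at hfg; omega)
    show 1 ≤ d ∧ 1 ≤ e ∧ 1 ≤ f ∧ 1 ≤ g ∧ d * e + f * g = n
    exact ⟨hd1, he1, hf1, hg1, by omega⟩
  · rintro ⟨⟨d, e⟩, ⟨f, g⟩⟩ hq
    rw [mem_S] at hq
    obtain ⟨h1, h2, h3, h4, h5⟩ := hq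
    have g1 : 1 ≤ d := h1
    have g2 : 1 ≤ e := h2
    have g3 : 1 ≤ f := h3
    have g4 : 1 ≤ g := h4
    have g5 : d * e + f * g = n := h5
    simp only [Finset.mem_sigma, Finset.mem_filter, Finset.HasAntidiagonal.mem_antidiagonal,
      Finset.mem_product, Nat.mem_divisorsAntidiagonal]
    have hde : 1 ≤ d * e := by
      calc 1 ≤ d := g1
      _ ≤ d * e := Nat.le_mul_of_pos_right _ (by omega)
    have hfg : 1 ≤ f * g := by
      calc 1 ≤ f := g3
      _ ≤ f * g := Nat.le_mul_of_pos_right _ (by omega)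
    refine ⟨⟨by omega, by omega, by omega⟩, ⟨trivial, by omega⟩, ⟨trivial, by omega⟩⟩
  · rintro ⟨⟨a, b⟩, ⟨⟨d, e⟩, ⟨f, g⟩⟩⟩ hq
    simp only [Finset.mem_sigma, Finset.mem_filter, Finset.HasAntidiagonal.mem_antidiagonal,
      Finset.mem_product, Nat.mem_divisorsAntidiagonal] at hq
    obtain ⟨⟨hab, ha, hb⟩, ⟨hde, ha0⟩, ⟨hfg, hb0⟩⟩ := hq
    show (⟨(d * e, f * g), ((d, e), (f, g))⟩ : (_ : ℕ × ℕ) × ((ℕ × ℕ) × ℕ × ℕ))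
      = ⟨(a, b), ((d, e), (f, g))⟩
    rw [hde, hfg]
  · rintro ⟨⟨d, e⟩, ⟨f, g⟩⟩ hq
    rfl
  · rintro ⟨⟨a, b⟩, ⟨⟨d, e⟩, ⟨f, g⟩⟩⟩ hq
    rfl

theorem r4_eq (n : ℕ) (hn : 1 ≤ n) :
    (r4 n : ℤ) = 8 * ∑ c ∈ n.divisors.filter (fun d => ¬ (4 ∣ d)), (c : ℤ) := by
  have h1 := r4_split n hn
  have h2 : ∑ p ∈ (Finset.HasAntidiagonal.antidiagonal n).filter (fun p => 1 ≤ p.1 ∧ 1 ≤ p.2),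
      (r2 p.1 : ℤ) * (r2 p.2 : ℤ)
      = 16 * ∑ p ∈ (Finset.HasAntidiagonal.antidiagonal n).filter (fun p => 1 ≤ p.1 ∧ 1 ≤ p.2),
          Efun p.1 * Efun p.2 := by
    rw [Finset.mul_sum]
    apply Finset.sum_congr rfl
    intro p hp
    rw [Finset.mem_filter] at hp
    rw [r2_eq _ hp.2.1, r2_eq _ hp.2.2]
    ring
  have h3 : ∑ q ∈ S n, chi q.1.1 * chi q.2.1 = - ∑ q ∈ S n, w q.1.1 q.2.1 := by
    rw [← Finset.sum_neg_distrib]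
    exact Finset.sum_congr rfl (fun q _ => chi_mul_chi_eq_neg_w _ _)
  have h4 := machine' n hn
  have h5 := conv_expand n
  have h6 := r2_eq n hn
  have h7 : Efun n = ∑ c ∈ n.divisors, chi c := rfl
  rw [h2, h5, h3] at h1
  rw [h6] at h1
  rw [← h7] at h4
  linarith


end Jacobi4


theorem jacobi_four_squares (n : ℕ) (hn : 0 < n) :
    Nat.card {x : ℤ × ℤ × ℤ × ℤ //
        x.1 ^ 2 + x.2.1 ^ 2 + x.2.2.1 ^ 2 + x.2.2.2 ^ 2 = (n : ℤ)}
      = 8 * ∑ d ∈ n.divisors.filter (fun d => ¬ (4 ∣ d)), d := by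
  have hcard : Nat.card {x : ℤ × ℤ × ℤ × ℤ //
      x.1 ^ 2 + x.2.1 ^ 2 + x.2.2.1 ^ 2 + x.2.2.2 ^ 2 = (n : ℤ)} = Jacobi4.r4 n := by
    have hset : {x : ℤ × ℤ × ℤ × ℤ |
        x.1 ^ 2 + x.2.1 ^ 2 + x.2.2.1 ^ 2 + x.2.2.2 ^ 2 = (n : ℤ)} = ↑(Jacobi4.R4 n) := by
      ext x
      simp only [Set.mem_setOf_eq, Finset.coe_sort_coe, Finset.mem_coe, Jacobi4.mem_R4]
    show Nat.card {x : ℤ × ℤ × ℤ × ℤ |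
        x.1 ^ 2 + x.2.1 ^ 2 + x.2.2.1 ^ 2 + x.2.2.2 ^ 2 = (n : ℤ)} = _
    rw [Nat.card_coe_set_eq, hset, Set.ncard_coe_finset]
    rfl
  rw [hcard]
  have := Jacobi4.r4_eq n hn
  have hcast : ((∑ d ∈ n.divisors.filter (fun d => ¬ (4 ∣ d)), d : ℕ) : ℤ)
      = ∑ c ∈ n.divisors.filter (fun d => ¬ (4 ∣ d)), (c : ℤ) := by push_cast; rfl
  omega
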